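/- For a prime p ≥ 5 and r ≥ 1, if k₁, k₂ ≥ 2 are even, k₁ ≡ k₂ (mod φ(p^r)), and k₁, k₂ ≢ 0 (mod p-1), then every Fourier coefficient of 𝒬^{(p)}_{k₁} is congruent modulo p^r to the corresponding coefficient of 𝒬^{(p)}_{k₂}, where 𝒬^{(p)}_k := 2^{k-2}(k-1)! ⟨Q_k^{(p)}⟩_q and ⟨f⟩_q := (∑_{λ∈𝒫} f(λ) q^{|λ|}) / (∑_{λ∈𝒫} q^{|λ|}). -/

import Mathlib

/-- Size of the Durfee square of the partition with row lengths `f 0 ≥ f 1 ≥ …`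
(0-indexed rows): the number of diagonal cells. -/
noncomputable def durfee (f : ℕ → ℕ) : ℕ := Nat.card {i : ℕ | i < f i}

/-- The conjugate partition: `conjFun f j` is the length of the `j`-th column. -/
noncomputable def conjFun (f : ℕ → ℕ) : ℕ → ℕ := fun j => Nat.card {i : ℕ | j < f i}

/-- Arm length of the `i`-th diagonal cell. -/
def armLen (f : ℕ → ℕ) (i : ℕ) : ℕ := f i - (i + 1)

/-- Leg length of the `i`-th diagonal cell. -/
noncomputable def legLen (f : ℕ → ℕ) (i : ℕ) : ℕ := conjFun f i - (i + 1)

/-- `P_k(λ) = ∑_{c ∈ C_λ} sgn(c) c^k`, where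
`C_λ = {a_i + 1/2} ∪ {-(b_i + 1/2)}` are the Frobenius coordinates. -/
noncomputable def Pk (k : ℕ) (f : ℕ → ℕ) : ℚ :=
  ∑ i ∈ Finset.range (durfee f),
    (((armLen f i : ℚ) + 1/2) ^ k - (-((legLen f i : ℚ) + 1/2)) ^ k)

/-- A function `ℕ → ℕ` represents a partition if it is weakly decreasing
and eventually zero. -/
def IsPartitionFun (f : ℕ → ℕ) : Prop :=
  (∀ i j, i ≤ j → f j ≤ f i) ∧ (∃ N, ∀ i, N ≤ i → f i = 0)

/-- The regularized `P^{(p)}_k(λ) = ∑_{c ∈ C_λ, gcd(2c,p)=1} sgn(c) c^k`: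
only Frobenius coordinates `c` whose (odd integer) numerator `2c` is coprime
to `p` contribute. -/
noncomputable def Ppk (p k : ℕ) (f : ℕ → ℕ) : ℚ :=
  ∑ i ∈ Finset.range (durfee f),
    ((if ¬ p ∣ (2 * armLen f i + 1) then ((armLen f i : ℚ) + 1/2) ^ k else 0)
      - (if ¬ p ∣ (2 * legLen f i + 1) then (-((legLen f i : ℚ) + 1/2)) ^ k else 0))

/-- The row lengths (0-indexed) of a partition of `n` given as a multiset of parts:
`rows λ i` is the `i`-th largest part (or `0`). -/
noncomputable def rows {n : ℕ} (lam : n.Partition) : ℕ → ℕ :=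
  fun i => Nat.card {j : ℕ | i < Multiset.card (lam.parts.filter (fun x => j < x))}

/-- `β_k = -B_k(2^{k-1}-1)/(2^{k-1} k!)`. -/
noncomputable def betaCoeff (k : ℕ) : ℚ :=
  -(bernoulli k * ((2 : ℚ) ^ ((k : ℤ) - 1) - 1)) / ((2 : ℚ) ^ ((k : ℤ) - 1) * (Nat.factorial k))

/-- `Q_k^{(p)}(λ) = P^{(p)}_{k-1}(λ)/(k-1)! + β_k^{(p)}` with `β_k^{(p)} = (1-p^{k-1})β_k`. -/
noncomputable def Qpk (p k : ℕ) (f : ℕ → ℕ) : ℚ :=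
  Ppk p (k - 1) f / (Nat.factorial (k - 1)) + (1 - (p : ℚ) ^ (k - 1)) * betaCoeff k

/-- The numerator `∑_{λ ∈ 𝒫} Q_k^{(p)}(λ) q^{|λ|}` of the q-bracket, as a formal power series. -/
noncomputable def numSeries (p k : ℕ) : PowerSeries ℚ :=
  PowerSeries.mk fun n => ∑ lam : n.Partition, Qpk p k (rows lam)

/-- The partition generating function `∑_{λ ∈ 𝒫} q^{|λ|}`. -/
noncomputable def partGen : PowerSeries ℚ :=
  PowerSeries.mk fun n => (Fintype.card n.Partition : ℚ)


open Finset


lemma binom_aux (x y : ℤ) : ∀ k : ℕ, ∃ z : ℤ, (x + y)^(k+1) = y^(k+1) + (k+1)*x*y^k + x^2*z := by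
  intro k
  induction k with
  | zero => exact ⟨0, by ring⟩
  | succ k ih =>
    obtain ⟨z, hz⟩ := ih
    exact ⟨z*y + (k+1)*y^k + x*z, by rw [pow_succ, hz]; push_cast; ring⟩

lemma sum_perm {M : Type*} [AddCommMonoid M] (N c c' : ℕ) (hN : 1 < N)
    (h1 : (c * c') % N = 1) (f : ℕ → M) :
    ∑ a ∈ range N, f ((c * a) % N) = ∑ a ∈ range N, f a := by
  have hN0 : 0 < N := by omega
  have key : ∀ b b' : ℕ, (b * b') % N = 1 → ∀ a, a < N → (b' * ((b * a) % N)) % N = a := by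
    intro b b' hbb a ha
    have h2 : b' * ((b * a) % N) ≡ b' * (b * a) [MOD N] :=
      Nat.ModEq.mul_left b' (Nat.mod_modEq (b*a) N)
    have h3 : b * b' ≡ 1 [MOD N] := by
      unfold Nat.ModEq; rw [hbb]; exact (Nat.mod_eq_of_lt hN).symm
    have h4 : b' * (b * a) ≡ 1 * a [MOD N] := by
      have : b' * (b * a) = (b * b') * a := by ring
      rw [this]; exact Nat.ModEq.mul_right a h3
    have h5 : b' * ((b * a) % N) ≡ a [MOD N] := by
      simpa using h2.trans h4
    calc (b' * ((b * a) % N)) % N = a % N := h5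
      _ = a := Nat.mod_eq_of_lt ha
  have h1' : (c' * c) % N = 1 := by rw [Nat.mul_comm]; exact h1
  refine Finset.sum_nbij' (fun a => (c * a) % N) (fun a => (c' * a) % N) ?_ ?_ ?_ ?_ ?_
  · intro a ha; exact mem_range.mpr (Nat.mod_lt _ hN0)
  · intro a ha; exact mem_range.mpr (Nat.mod_lt _ hN0)
  · intro a ha; exact key c c' h1 a (mem_range.mp ha)
  · intro a ha
    have := key c' c h1' a (mem_range.mp ha)
    simpa using this
  · intro a ha; rfl

lemma sum_mult {M : Type*} [AddCommMonoid M] (P K : ℕ) (hP : 0 < P) (g : ℕ → M) :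
    ∑ a ∈ range (P * K), (if P ∣ a then g a else 0) = ∑ b ∈ range K, g (P * b) := by
  rw [← Finset.sum_filter]
  refine Finset.sum_nbij' (fun a => a / P) (fun b => P * b) ?_ ?_ ?_ ?_ ?_
  · intro a ha
    simp only [mem_filter, mem_range] at ha
    exact mem_range.mpr (Nat.div_lt_of_lt_mul ha.1)
  · intro b hb
    simp only [mem_filter, mem_range]
    exact ⟨by have := mem_range.mp hb; exact (Nat.mul_lt_mul_left hP).mpr this, Dvd.intro b rfl⟩
  · intro a ha
    simp only [mem_filter] at ha
    exact Nat.mul_div_cancel' ha.2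
  · intro b hb; exact Nat.mul_div_cancel_left b hP
  · intro a ha
    simp only [mem_filter] at ha
    rw [Nat.mul_div_cancel' ha.2]

-- S_k decomposition
lemma sq_eq (k n : ℕ) (hk : 1 ≤ k) :
    (∑ a ∈ range n, (a:ℚ)^k) = bernoulli k * n
      + (n:ℚ)^2 * ∑ i ∈ range k, bernoulli i * ((k+1).choose i) * (n:ℚ)^(k-1-i)/(k+1) := by
  rw [sum_range_pow]
  rw [Finset.sum_range_succ]
  have h1 : (bernoulli k * ((k+1).choose k) * (n:ℚ)^(k+1-k)/(k+1)) = bernoulli k * n := by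
    rw [Nat.choose_succ_self_right]
    have : k + 1 - k = 1 := by omega
    rw [this, pow_one]
    have hne : ((k:ℚ)+1) ≠ 0 := by positivity
    field_simp
    push_cast
    ring
  rw [h1, Finset.mul_sum, add_comm]
  congr 1
  refine Finset.sum_congr rfl ?_

  intro i hi
  have hik : i < k := mem_range.mp hi
  have h2 : k + 1 - i = (k - 1 - i) + 2 := by omega
  rw [h2, pow_add]
  ring

noncomputable def Aint (p m c k : ℕ) : ℤ :=
  ∑ a ∈ Finset.range (p^m), if p ∣ a then 0
    else ((c*a)/(p^m) : ℕ) * (((c*a) % (p^m) : ℕ):ℤ)^(k-1)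

section
variable {p : ℕ} [hp : Fact p.Prime]

lemma twist_identity (m c c' k : ℕ) (hm : 1 ≤ m) (hk : 1 ≤ k) (hc : ¬ p ∣ c)
    (h1 : (c * c') % (p^m) = 1)
    (sum_perm : ∀ f : ℕ → ℤ, ∑ a ∈ range (p^m), f ((c * a) % (p^m)) = ∑ a ∈ range (p^m), f a) :
    ∃ Z : ℤ, (c:ℤ)^k * (∑ a ∈ range (p^m), if p ∣ a then 0 else (a:ℤ)^k)
      = (∑ a ∈ range (p^m), if p ∣ a then 0 else (a:ℤ)^k)
        + k * p^m * Aint p m c k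
        + (p^m:ℤ)^2 * Z := by
  unfold Aint
  set N := p^m with hN
  have hdvd_iff : ∀ a : ℕ, p ∣ (c*a) % N ↔ p ∣ a := by
    intro a
    have hpN : p ∣ N := dvd_pow_self p (by omega)
    have hsplit : N * ((c*a)/N) + (c*a) % N = c*a := Nat.div_add_mod (c*a) N
    constructor
    · intro h
      have : p ∣ c * a := by
        have := Nat.dvd_add (Dvd.dvd.mul_right hpN ((c*a)/N)) h
        rwa [hsplit] at this
      rcases (hp.out.dvd_mul.mp this) with h' | h'
      · exact absurd h' hc
      · exact h'
    · intro h
      have h2 : p ∣ c * a := Dvd.dvd.mul_left h c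
      have h3 : p ∣ N * ((c*a)/N) := Dvd.dvd.mul_right hpN _
      rw [← hsplit] at h2
      exact (Nat.dvd_add_right h3).mp h2
  have h_each : ∀ a : ℕ, ∃ z : ℤ, ((c*a : ℕ):ℤ)^k
      = (((c*a) % N : ℕ):ℤ)^k + k * N * (((c*a)/N : ℕ) * (((c*a) % N : ℕ):ℤ)^(k-1))
        + (N:ℤ)^2 * (((c*a)/N : ℕ):ℤ)^2 * z := by
    intro a
    obtain ⟨z, hz⟩ := binom_aux ((N:ℤ) * ((c*a)/N : ℕ)) (((c*a) % N : ℕ):ℤ) (k-1)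
    refine ⟨z, ?_⟩
    have hsplit : ((c*a : ℕ):ℤ) = (N:ℤ) * ((c*a)/N : ℕ) + (((c*a) % N : ℕ):ℤ) := by
      push_cast
      exact_mod_cast congrArg (Nat.cast : ℕ → ℤ) (Nat.div_add_mod (c*a) N).symm
    have hk1 : k - 1 + 1 = k := by omega
    rw [hk1] at hz
    rw [show ((k-1:ℕ):ℤ) + 1 = (k:ℤ) from by exact_mod_cast congrArg (Nat.cast : ℕ → ℤ) hk1] at hz
    rw [hsplit, hz]
    ring
  choose z hz using h_each
  refine ⟨∑ a ∈ range N, if p ∣ a then 0 else (((c*a)/N : ℕ):ℤ)^2 * z a, ?_⟩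
  have step1 : (c:ℤ)^k * (∑ a ∈ range N, if p ∣ a then 0 else (a:ℤ)^k)
      = ∑ a ∈ range N, if p ∣ a then 0 else ((c*a : ℕ):ℤ)^k := by
    rw [Finset.mul_sum]
    refine Finset.sum_congr rfl fun a _ => ?_
    rw [mul_ite, mul_zero]
    congr 1
    push_cast
    ring
  rw [step1]
  have step2 : ∑ a ∈ range N, (if p ∣ a then 0 else ((c*a : ℕ):ℤ)^k)
      = (∑ a ∈ range N, if p ∣ a then 0 else (((c*a) % N : ℕ):ℤ)^k)
        + (k * N * ∑ a ∈ range N, if p ∣ a then 0 else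
            (((c*a)/N : ℕ) * (((c*a) % N : ℕ):ℤ)^(k-1)))
        + (N:ℤ)^2 * ∑ a ∈ range N, (if p ∣ a then 0 else (((c*a)/N : ℕ):ℤ)^2 * z a) := by
    rw [Finset.mul_sum, Finset.mul_sum, ← Finset.sum_add_distrib, ← Finset.sum_add_distrib]
    refine Finset.sum_congr rfl fun a _ => ?_
    by_cases hpa : p ∣ a
    · simp [hpa]
    · simp only [hpa, if_false]
      rw [hz a]; ring
  rw [step2]
  have step3 : (∑ a ∈ range N, if p ∣ a then 0 else (((c*a) % N : ℕ):ℤ)^k)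
      = ∑ a ∈ range N, if p ∣ a then 0 else (a:ℤ)^k := by
    have : ∀ a : ℕ, (if p ∣ a then (0:ℤ) else (((c*a) % N : ℕ):ℤ)^k)
        = (fun x => if p ∣ x then (0:ℤ) else (x:ℤ)^k) ((c*a) % N) := by
      intro a
      simp only []
      by_cases hpa : p ∣ a
      · rw [if_pos hpa, if_pos ((hdvd_iff a).mpr hpa)]
      · rw [if_neg hpa, if_neg (fun h => hpa ((hdvd_iff a).mp h))]
    calc (∑ a ∈ range N, if p ∣ a then 0 else (((c*a) % N : ℕ):ℤ)^k)
        = ∑ a ∈ range N, (fun x => if p ∣ x then (0:ℤ) else (x:ℤ)^k) ((c*a) % N) :=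
          Finset.sum_congr rfl fun a _ => this a
      _ = ∑ a ∈ range N, (fun x => if p ∣ x then (0:ℤ) else (x:ℤ)^k) a := sum_perm (fun x => if p ∣ x then (0:ℤ) else (x:ℤ)^k)
      _ = _ := rfl
  rw [step3]
  rw [hN]
  push_cast
  ring
end

noncomputable def epsQ (k n : ℕ) : ℚ :=
  ∑ i ∈ Finset.range k, bernoulli i * ((k+1).choose i) * (n:ℚ)^(k-1-i)/(k+1)

noncomputable def Ebound (p k : ℕ) [Fact p.Prime] : ℝ :=
  ∑ i ∈ Finset.range k, ‖((bernoulli i * ((k+1).choose i) / (k+1) : ℚ) : ℚ_[p])‖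

noncomputable def wQ (p k : ℕ) : ℚ := (1 - (p:ℚ)^(k-1)) * bernoulli k / k

section
variable {p : ℕ} [hp : Fact p.Prime]

lemma norm_nat_le_one (n : ℕ) : ‖(n : ℚ_[p])‖ ≤ 1 := by
  have := Padic.norm_int_le_one (p := p) (n : ℤ)
  push_cast at this
  exact this

lemma eps_bound (k n : ℕ) : ‖((epsQ k n : ℚ) : ℚ_[p])‖ ≤ Ebound p k := by
  unfold epsQ Ebound
  push_cast
  refine (norm_sum_le _ _).trans (Finset.sum_le_sum fun i _ => ?_)
  have heq : ((bernoulli i : ℚ_[p]) * ((k+1).choose i) * ((n:ℚ_[p]))^(k-1-i)/((k:ℚ_[p])+1))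
      = ((bernoulli i : ℚ) * ((k+1).choose i) / ((k:ℚ)+1) : ℚ) * ((n:ℚ_[p]))^(k-1-i) := by
    push_cast
    ring
  rw [heq, norm_mul]
  calc ‖((bernoulli i * ((k+1).choose i) / ((k:ℚ)+1) : ℚ) : ℚ_[p])‖ * ‖((n:ℚ_[p]))^(k-1-i)‖
      ≤ ‖((bernoulli i * ((k+1).choose i) / ((k:ℚ)+1) : ℚ) : ℚ_[p])‖ * 1 := by
        refine mul_le_mul_of_nonneg_left ?_ (norm_nonneg _)
        rw [norm_pow]
        exact pow_le_one₀ (norm_nonneg _) (norm_nat_le_one n)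
    _ = _ := by rw [mul_one]; norm_cast
end

section
variable {p : ℕ} [hp : Fact p.Prime]

lemma norm_sub_le_max' (x y : ℚ_[p]) : ‖x - y‖ ≤ max ‖x‖ ‖y‖ := by
  have h := IsUltrametricDist.norm_add_le_max x (-y)
  rw [norm_neg, ← sub_eq_add_neg] at h
  exact h

lemma claim1 (m c c' k : ℕ) (hm : 1 ≤ m) (hk : 2 ≤ k) (hc : ¬ p ∣ c)
    (h1 : (c * c') % (p^m) = 1) :
    ‖((((c:ℚ)^k - 1) * wQ p k : ℚ) : ℚ_[p]) - ((Aint p m c k : ℤ) : ℚ_[p])‖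
      ≤ (p:ℝ)^(-(m:ℤ)) * (‖((k : ℚ_[p]))‖⁻¹ * max 1 (Ebound p k)) := by
  have hp1 : 1 < p := hp.out.one_lt
  have hN1 : 1 < p ^ m := Nat.one_lt_pow (by omega) hp1
  have hk0 : (k:ℚ) ≠ 0 := Nat.cast_ne_zero.mpr (by omega)
  have hp0 : (p:ℚ) ≠ 0 := Nat.cast_ne_zero.mpr (by omega)
  have hperm : ∀ f : ℕ → ℤ, ∑ a ∈ range (p^m), f ((c * a) % (p^m)) = ∑ a ∈ range (p^m), f a :=
    fun f => sum_perm (p^m) c c' hN1 h1 f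
  obtain ⟨Z, hZ⟩ := twist_identity (p := p) m c c' k hm (by omega) hc h1 hperm
  set Tq : ℚ := ∑ a ∈ range (p^m), (if p ∣ a then 0 else (a:ℚ)^k) with hTq
  have hI : ((c:ℚ)^k - 1) * Tq
      = k * (p:ℚ)^m * ((Aint p m c k : ℤ) : ℚ) + ((p:ℚ)^m)^2 * (Z:ℚ) := by
    have h := congrArg (Int.cast : ℤ → ℚ) hZ
    push_cast [apply_ite (Int.cast : ℤ → ℚ)] at h
    rw [← hTq] at h
    linear_combination h
  set δ : ℚ := epsQ k (p^m) - (p:ℚ)^(k-2) * epsQ k (p^(m-1)) with hδ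
  have hT2 : Tq = (1 - (p:ℚ)^(k-1)) * bernoulli k * (p:ℚ)^m + ((p:ℚ)^m)^2 * δ := by
    have hsplitN : p^m = p * p^(m-1) := by
      rw [← pow_succ']; congr 1; omega
    have e1 : Tq = (∑ a ∈ range (p^m), (a:ℚ)^k)
        - (p:ℚ)^k * (∑ b ∈ range (p^(m-1)), (b:ℚ)^k) := by
      have e2 : ∑ a ∈ range (p^m), (if p ∣ a then ((a:ℚ)^k) else 0)
          = ∑ b ∈ range (p^(m-1)), ((p*b : ℕ):ℚ)^k := by
        rw [hsplitN]
        exact sum_mult p (p^(m-1)) (by omega) (fun a => (a:ℚ)^k)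
      have e3 : ∑ b ∈ range (p^(m-1)), ((p*b : ℕ):ℚ)^k
          = (p:ℚ)^k * ∑ b ∈ range (p^(m-1)), (b:ℚ)^k := by
        rw [Finset.mul_sum]
        refine Finset.sum_congr rfl fun b _ => ?_
        push_cast
        ring
      rw [hTq, ← e3, ← e2, ← Finset.sum_sub_distrib]
      refine Finset.sum_congr rfl fun a _ => ?_
      by_cases hpa : p ∣ a <;> simp [hpa]
    rw [e1, sq_eq k (p^m) (by omega), sq_eq k (p^(m-1)) (by omega), hδ]
    unfold epsQ
    push_cast
    have hm1 : (p:ℚ)^m = (p:ℚ) * (p:ℚ)^(m-1) := by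
      rw [← pow_succ']; congr 1; omega
    have hk1 : (p:ℚ)^k = (p:ℚ)^(k-1) * (p:ℚ) := by
      rw [← pow_succ]; congr 1; omega
    have hk2 : (p:ℚ)^(k-1) = (p:ℚ)^(k-2) * (p:ℚ) := by
      rw [← pow_succ]; congr 1; omega
    rw [hk1, hk2, hm1]
    ring
  set A : ℚ := ((Aint p m c k : ℤ) : ℚ) with hA
  set W : ℚ := (Z:ℚ) - ((c:ℚ)^k - 1) * δ with hW
  have hw : wQ p k * k = (1-(p:ℚ)^(k-1)) * bernoulli k := by
    rw [wQ]; field_simp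
  have key : ((c:ℚ)^k-1) * ((1-(p:ℚ)^(k-1)) * bernoulli k) * (p:ℚ)^m
      - k*(p:ℚ)^m*A = ((p:ℚ)^m)^2 * W := by
    linear_combination hI - ((c:ℚ)^k-1) * hT2
  have hG : (((c:ℚ)^k - 1) * wQ p k - A) * ((k:ℚ) * (p:ℚ)^m) = ((p:ℚ)^m)^2 * W := by
    linear_combination key + ((c:ℚ)^k - 1) * (p:ℚ)^m * hw
  -- move to ℚ_[p]
  set X : ℚ_[p] := ((((c:ℚ)^k - 1) * wQ p k : ℚ) : ℚ_[p]) - ((Aint p m c k : ℤ) : ℚ_[p]) with hX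
  have hXQ : X = ((((((c:ℚ)^k - 1) * wQ p k - A) : ℚ)) : ℚ_[p]) := by
    rw [hX, hA]; push_cast; ring
  have hkp0 : ((k:ℚ_[p])) ≠ 0 := Nat.cast_ne_zero.mpr (by omega)
  have hpp0 : ((p:ℚ_[p])) ≠ 0 := Nat.cast_ne_zero.mpr (by omega)
  have hXval : X = (((p:ℚ_[p])^m)^2 * ((W:ℚ):ℚ_[p])) / ((k:ℚ_[p]) * (p:ℚ_[p])^m) := by
    rw [eq_div_iff (by exact mul_ne_zero hkp0 (pow_ne_zero _ hpp0))]
    rw [hXQ]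
    have := congrArg (fun x : ℚ => (x : ℚ_[p])) hG
    push_cast at this ⊢
    convert this using 2
  have hnormX : ‖X‖ = (p:ℝ)^(-(m:ℤ)) * (‖((k:ℚ_[p]))‖⁻¹ * ‖((W:ℚ):ℚ_[p])‖) := by
    rw [hXval, norm_div, norm_mul, norm_mul, norm_pow, norm_pow]
    have hnp : ‖(p:ℚ_[p])‖ = (p:ℝ)⁻¹ := Padic.norm_p
    have h1 : ((p:ℝ))^(-(m:ℤ)) = ((p:ℝ)⁻¹)^m := by
      rw [zpow_neg, zpow_natCast, inv_pow]
    rw [hnp, h1]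
    have hk0' : ‖((k:ℚ_[p]))‖ ≠ 0 := norm_ne_zero_iff.mpr hkp0
    have hppR : (0:ℝ) < p := by positivity
    have hpn0 : ((p:ℝ)⁻¹)^m ≠ 0 := by positivity
    field_simp
  have hE0 : 0 ≤ Ebound p k := by
    unfold Ebound
    exact Finset.sum_nonneg fun i _ => norm_nonneg _
  have hδb : ‖((δ:ℚ):ℚ_[p])‖ ≤ Ebound p k := by
    rw [hδ]
    push_cast
    refine (norm_sub_le_max' _ _).trans (max_le (eps_bound _ _) ?_)
    rw [norm_mul]
    calc ‖((p:ℚ_[p]))^(k-2)‖ * ‖((epsQ k (p^(m-1)) : ℚ) : ℚ_[p])‖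
        ≤ 1 * Ebound p k := by
          refine mul_le_mul ?_ (eps_bound _ _) (norm_nonneg _) zero_le_one
          rw [norm_pow]
          exact pow_le_one₀ (norm_nonneg _) (norm_nat_le_one p)
      _ = Ebound p k := one_mul _
  have hWb : ‖((W:ℚ):ℚ_[p])‖ ≤ max 1 (Ebound p k) := by
    rw [hW]
    push_cast
    refine (norm_sub_le_max' _ _).trans (max_le ?_ ?_)
    · exact le_max_of_le_left (by exact_mod_cast Padic.norm_int_le_one (p := p) Z)
    · rw [norm_mul]
      have h1 : ‖((c:ℚ_[p])^k - 1)‖ ≤ 1 := by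
        have h2 := Padic.norm_int_le_one (p := p) ((c:ℤ)^k - 1)
        push_cast at h2
        exact h2
      refine le_max_of_le_right ?_
      calc ‖(c:ℚ_[p])^k - 1‖ * ‖((δ:ℚ):ℚ_[p])‖ ≤ 1 * Ebound p k :=
            mul_le_mul h1 hδb (norm_nonneg _) zero_le_one
        _ = _ := one_mul _
  show ‖X‖ ≤ _
  rw [hnormX]
  refine mul_le_mul_of_nonneg_left ?_ (by positivity)
  exact mul_le_mul_of_nonneg_left hWb (by positivity)
end

section
variable {p : ℕ} [hp : Fact p.Prime]

lemma pow_pow_dvd {m' : ℕ} (hm' : ¬ p ∣ m') {r e₁ e₂ : ℕ}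
    (h : e₁ ≡ e₂ [MOD Nat.totient (p ^ r)]) :
    (p ^ r : ℤ) ∣ (m' : ℤ) ^ e₁ - (m' : ℤ) ^ e₂ := by
  have hcop : Nat.Coprime m' (p ^ r) :=
    Nat.Coprime.pow_right r (Nat.coprime_comm.mp (hp.out.coprime_iff_not_dvd.mpr hm'))
  have key : ∀ a b : ℕ, a ≤ b → a ≡ b [MOD Nat.totient (p ^ r)] →
      m' ^ a ≡ m' ^ b [MOD p ^ r] := by
    intro a b hab hmod
    obtain ⟨j, hj⟩ := (Nat.modEq_iff_dvd' hab).mp hmod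
    have hb : b = a + Nat.totient (p ^ r) * j := by omega
    calc m' ^ a = m' ^ a * 1 ^ j := by ring
      _ ≡ m' ^ a * (m' ^ Nat.totient (p ^ r)) ^ j [MOD p ^ r] :=
        Nat.ModEq.mul_left _ (Nat.ModEq.pow j (Nat.ModEq.pow_totient hcop).symm)
      _ = m' ^ b := by rw [hb]; ring
  have hmod : m' ^ e₁ ≡ m' ^ e₂ [MOD p ^ r] := by
    rcases le_total e₁ e₂ with hle | hle
    · exact key _ _ hle h
    · exact (key _ _ hle h.symm).symm
  have h2 := hmod.dvd
  push_cast at h2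
  exact (dvd_sub_comm).mp h2

lemma int_cong {a b : ℤ} {r : ℕ} (h : (p ^ r : ℤ) ∣ a - b) :
    ‖(a : ℚ_[p]) - (b : ℚ_[p])‖ ≤ (p : ℝ) ^ (-(r : ℤ)) := by
  have := (Padic.norm_int_le_pow_iff_dvd (p := p) (a - b) r).mpr h
  push_cast at this
  exact this

lemma mod_dvd_iff (m c : ℕ) (hm : 1 ≤ m) (hc : ¬ p ∣ c) (a : ℕ) :
    p ∣ (c * a) % (p ^ m) ↔ p ∣ a := by
  have hpN : p ∣ p ^ m := dvd_pow_self p (by omega)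
  have hsplit : p^m * ((c*a)/(p^m)) + (c*a) % (p^m) = c*a := Nat.div_add_mod (c*a) (p^m)
  constructor
  · intro h
    have h2 : p ∣ c * a := by
      have := Nat.dvd_add (Dvd.dvd.mul_right hpN ((c*a)/(p^m))) h
      rwa [hsplit] at this
    rcases hp.out.dvd_mul.mp h2 with h' | h'
    · exact absurd h' hc
    · exact h'
  · intro h
    have h2 : p ∣ c * a := Dvd.dvd.mul_left h c
    have h3 : p ∣ p^m * ((c*a)/(p^m)) := Dvd.dvd.mul_right hpN _
    rw [← hsplit] at h2
    exact (Nat.dvd_add_right h3).mp h2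

lemma claim2 {m c k₁ k₂ r : ℕ} (hm : 1 ≤ m) (hc : ¬ p ∣ c)
    (h : k₁ - 1 ≡ k₂ - 1 [MOD Nat.totient (p ^ r)]) :
    (p ^ r : ℤ) ∣ Aint p m c k₁ - Aint p m c k₂ := by
  unfold Aint
  rw [← Finset.sum_sub_distrib]
  refine Finset.dvd_sum fun a ha => ?_
  by_cases hpa : p ∣ a
  · simp [hpa]
  · simp only [hpa, if_false]
    have hnr : ¬ p ∣ (c * a) % (p ^ m) := fun h' => hpa ((mod_dvd_iff m c hm hc a).mp h')
    have hd := pow_pow_dvd (p := p) hnr h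
    have : (((c*a)/(p^m) : ℕ) : ℤ) * (((c*a) % (p^m) : ℕ):ℤ)^(k₁-1)
        - (((c*a)/(p^m) : ℕ) : ℤ) * (((c*a) % (p^m) : ℕ):ℤ)^(k₂-1)
        = (((c*a)/(p^m) : ℕ) : ℤ) * ((((c*a) % (p^m) : ℕ):ℤ)^(k₁-1) - (((c*a) % (p^m) : ℕ):ℤ)^(k₂-1)) := by
      ring
    rw [this]
    exact Dvd.dvd.mul_left hd _

lemma kummer {r k₁ k₂ : ℕ} (hr : 1 ≤ r) (hk₁ : 2 ≤ k₁) (hk₂ : 2 ≤ k₂)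
    (hcong : k₁ ≡ k₂ [MOD Nat.totient (p ^ r)])
    (hnd₁ : ¬ (p - 1) ∣ k₁) (hnd₂ : ¬ (p - 1) ∣ k₂) :
    ‖((wQ p k₁ : ℚ) : ℚ_[p]) - ((wQ p k₂ : ℚ) : ℚ_[p])‖ ≤ (p : ℝ) ^ (-(r : ℤ))
      ∧ ‖((wQ p k₂ : ℚ) : ℚ_[p])‖ ≤ 1 := by
  have hp1 : 1 < p := hp.out.one_lt
  -- primitive root
  obtain ⟨g, hg⟩ := IsCyclic.exists_generator (α := (ZMod p)ˣ)
  set c : ℕ := ((g : ZMod p)).val with hcdef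
  have hcast : (c : ZMod p) = (g : ZMod p) := by
    rw [hcdef, ZMod.natCast_val, ZMod.cast_id]
  have hc : ¬ p ∣ c := by
    intro hdvd
    have : (c : ZMod p) = 0 := (ZMod.natCast_eq_zero_iff c p).mpr hdvd
    rw [hcast] at this
    exact Units.ne_zero g this
  have horder : orderOf g = p - 1 := by
    rw [orderOf_eq_card_of_forall_mem_zpowers hg, Nat.card_eq_fintype_card,
      ZMod.card_units_eq_totient, Nat.totient_prime hp.out]
  have hck : ∀ k, ¬ (p - 1) ∣ k → ¬ (p:ℤ) ∣ ((c:ℤ)^k - 1) := by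
    intro k hk hdvd
    have h0 : (((c:ℤ)^k - 1 : ℤ) : ZMod p) = 0 :=
      (ZMod.intCast_zmod_eq_zero_iff_dvd _ p).mpr hdvd
    push_cast at h0
    have h1 : (c : ZMod p)^k = 1 := by linear_combination h0
    rw [hcast] at h1
    have h2 : g ^ k = 1 := by
      ext
      push_cast
      exact h1
    exact hk (horder ▸ orderOf_dvd_of_pow_eq_one h2)
  -- pick m
  obtain ⟨t, ht⟩ := pow_unbounded_of_one_lt
    (max (‖((k₁ : ℚ_[p]))‖⁻¹ * max 1 (Ebound p k₁)) (‖((k₂ : ℚ_[p]))‖⁻¹ * max 1 (Ebound p k₂)))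
    (show (1:ℝ) < p by exact_mod_cast hp1)
  set m : ℕ := r + t with hmdef
  have hm : 1 ≤ m := by omega
  -- inverse of c mod p^m
  haveI : NeZero (p ^ m) := ⟨by positivity⟩
  have hN1 : 1 < p ^ m := Nat.one_lt_pow (by omega) hp1
  have hcop : Nat.Coprime c (p ^ m) :=
    Nat.Coprime.pow_right m (Nat.coprime_comm.mp (hp.out.coprime_iff_not_dvd.mpr hc))
  set u : (ZMod (p^m))ˣ := ZMod.unitOfCoprime c hcop with hudef
  set c' : ℕ := ((u⁻¹ : (ZMod (p^m))ˣ) : ZMod (p^m)).val with hc'def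
  have h1 : (c * c') % (p ^ m) = 1 := by
    have e1 : ((c * c' : ℕ) : ZMod (p^m)) = ((1 : ℕ) : ZMod (p^m)) := by
      have t2 : (c' : ZMod (p^m)) = ((u⁻¹ : (ZMod (p^m))ˣ) : ZMod (p^m)) := by
        rw [hc'def, ZMod.natCast_val, ZMod.cast_id]
      have t1 : (c : ZMod (p^m)) = (u : ZMod (p^m)) := (ZMod.coe_unitOfCoprime c hcop).symm
      rw [Nat.cast_one, Nat.cast_mul, t1, t2]
      rw [← Units.val_mul, mul_inv_cancel, Units.val_one]
    have e2 : c * c' ≡ 1 [MOD p^m] := (ZMod.natCast_eq_natCast_iff _ _ _).mp e1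
    calc (c * c') % (p^m) = 1 % (p^m) := e2
      _ = 1 := Nat.mod_eq_of_lt hN1
  -- apply claim1
  have hb₁ := claim1 (p := p) m c c' k₁ hm hk₁ hc h1
  have hb₂ := claim1 (p := p) m c c' k₂ hm hk₂ hc h1
  have hp0R : (0:ℝ) < p := by positivity
  have hshift : ∀ K : ℝ, K ≤ (p:ℝ)^t → (p:ℝ)^(-(m:ℤ)) * K ≤ (p:ℝ)^(-(r:ℤ)) := by
    intro K hK
    have e : (p:ℝ)^(-(m:ℤ)) * (p:ℝ)^t = (p:ℝ)^(-(r:ℤ)) := by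
      rw [← zpow_natCast (p:ℝ) t, ← zpow_add₀ (ne_of_gt hp0R)]
      congr 1
      push_cast [hmdef]
      ring
    calc (p:ℝ)^(-(m:ℤ)) * K ≤ (p:ℝ)^(-(m:ℤ)) * (p:ℝ)^t :=
          mul_le_mul_of_nonneg_left hK (by positivity)
      _ = _ := e
  have hb₁' : ‖((((c:ℚ)^k₁ - 1) * wQ p k₁ : ℚ) : ℚ_[p]) - ((Aint p m c k₁ : ℤ) : ℚ_[p])‖
      ≤ (p:ℝ)^(-(r:ℤ)) :=
    hb₁.trans (hshift _ ((le_max_left _ _).trans ht.le))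
  have hb₂' : ‖((((c:ℚ)^k₂ - 1) * wQ p k₂ : ℚ) : ℚ_[p]) - ((Aint p m c k₂ : ℤ) : ℚ_[p])‖
      ≤ (p:ℝ)^(-(r:ℤ)) :=
    hb₂.trans (hshift _ ((le_max_right _ _).trans ht.le))
  -- A₁ ≡ A₂
  have hkm1 : k₁ - 1 ≡ k₂ - 1 [MOD Nat.totient (p ^ r)] := by
    have h1' : (k₁ - 1) + 1 ≡ (k₂ - 1) + 1 [MOD Nat.totient (p ^ r)] := by
      have e1 : k₁ - 1 + 1 = k₁ := by omega
      have e2 : k₂ - 1 + 1 = k₂ := by omega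
      rw [e1, e2]; exact hcong
    exact Nat.ModEq.add_right_cancel' 1 h1'
  have hA12 : ‖((Aint p m c k₁ : ℤ) : ℚ_[p]) - ((Aint p m c k₂ : ℤ) : ℚ_[p])‖
      ≤ (p:ℝ)^(-(r:ℤ)) := int_cong (claim2 hm hc hkm1)
  -- norms of units
  have hnormu : ∀ k, ¬ (p-1) ∣ k → ‖((c:ℚ_[p])^k - 1)‖ = 1 := by
    intro k hk
    have hle : ‖((c:ℚ_[p])^k - 1)‖ ≤ 1 := by
      have h2 := Padic.norm_int_le_one (p := p) ((c:ℤ)^k - 1)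
      push_cast at h2
      exact h2
    have hlt : ¬ ‖((c:ℚ_[p])^k - 1)‖ < 1 := by
      intro hlt
      have : ‖(((c:ℤ)^k - 1 : ℤ) : ℚ_[p])‖ < 1 := by push_cast; exact hlt
      exact hck k hk (Padic.norm_intCast_lt_one_iff.mp this)
    linarith [lt_or_eq_of_le hle]
  set ε : ℝ := (p:ℝ)^(-(r:ℤ)) with hεdef
  have hε1 : ε ≤ 1 := by
    rw [hεdef, zpow_neg, zpow_natCast]
    have h : (1:ℝ) ≤ (p:ℝ)^r := one_le_pow₀ (by exact_mod_cast hp1.le)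
    exact inv_le_one_of_one_le₀ h
  set w₁ : ℚ_[p] := ((wQ p k₁ : ℚ) : ℚ_[p]) with hw1def
  set w₂ : ℚ_[p] := ((wQ p k₂ : ℚ) : ℚ_[p]) with hw2def
  set u₁ : ℚ_[p] := (c:ℚ_[p])^k₁ - 1 with hu1def
  set u₂ : ℚ_[p] := (c:ℚ_[p])^k₂ - 1 with hu2def
  set A₁ : ℚ_[p] := ((Aint p m c k₁ : ℤ) : ℚ_[p]) with hA1def
  set A₂ : ℚ_[p] := ((Aint p m c k₂ : ℤ) : ℚ_[p]) with hA2def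
  have hb₁'' : ‖u₁ * w₁ - A₁‖ ≤ ε := by
    have e : ((((c:ℚ)^k₁ - 1) * wQ p k₁ : ℚ) : ℚ_[p]) = u₁ * w₁ := by
      push_cast [hw1def, hu1def]
      ring
    rw [← e]
    exact hb₁'
  have hb₂'' : ‖u₂ * w₂ - A₂‖ ≤ ε := by
    have e : ((((c:ℚ)^k₂ - 1) * wQ p k₂ : ℚ) : ℚ_[p]) = u₂ * w₂ := by
      push_cast [hw2def, hu2def]
      ring
    rw [← e]
    exact hb₂'
  have h6 : ‖u₁ * w₁ - u₂ * w₂‖ ≤ ε := by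
    have e : u₁ * w₁ - u₂ * w₂ = ((u₁ * w₁ - A₁) + (A₁ - A₂)) + (A₂ - u₂ * w₂) := by ring
    rw [e]
    refine (IsUltrametricDist.norm_add_le_max _ _).trans (max_le ?_ ?_)
    · exact (IsUltrametricDist.norm_add_le_max _ _).trans (max_le hb₁'' hA12)
    · rw [show A₂ - u₂ * w₂ = -(u₂ * w₂ - A₂) by ring, norm_neg]
      exact hb₂''
  have hA2n : ‖A₂‖ ≤ 1 := by
    rw [hA2def]
    exact Padic.norm_int_le_one _
  have hu2w2 : ‖u₂ * w₂‖ ≤ 1 := by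
    have e : u₂ * w₂ = (u₂ * w₂ - A₂) + A₂ := by ring
    rw [e]
    exact (IsUltrametricDist.norm_add_le_max _ _).trans (max_le (hb₂''.trans hε1) hA2n)
  have hw2n : ‖w₂‖ ≤ 1 := by
    rw [norm_mul, hu2def, hnormu k₂ hnd₂, one_mul] at hu2w2
    exact hu2w2
  have hu12 : ‖u₂ - u₁‖ ≤ ε := by
    have hd := pow_pow_dvd (p := p) hc (r := r) hcong.symm
    have := int_cong (p := p) hd
    push_cast at this
    rw [hu2def, hu1def]
    have e : (c:ℚ_[p])^k₂ - 1 - ((c:ℚ_[p])^k₁ - 1) = (c:ℚ_[p])^k₂ - (c:ℚ_[p])^k₁ := by ring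
    rw [e]
    exact this
  have h8 : ‖u₁ * (w₁ - w₂)‖ ≤ ε := by
    have e : u₁ * (w₁ - w₂) = (u₁ * w₁ - u₂ * w₂) + (u₂ - u₁) * w₂ := by ring
    rw [e]
    refine (IsUltrametricDist.norm_add_le_max _ _).trans (max_le h6 ?_)
    calc ‖(u₂ - u₁) * w₂‖ = ‖u₂ - u₁‖ * ‖w₂‖ := norm_mul _ _
      _ ≤ ε * 1 := mul_le_mul hu12 hw2n (norm_nonneg _) ((norm_nonneg _).trans hu12)
      _ = ε := mul_one _
  rw [norm_mul, hu1def, hnormu k₁ hnd₁, one_mul] at h8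
  exact ⟨by rw [← norm_sub_rev] at h8 ⊢; exact h8, hw2n⟩
end

section
variable {p : ℕ} [hp : Fact p.Prime]
variable {p : ℕ} [hp : Fact p.Prime]

lemma usum {ι : Type*} (s : Finset ι) (f : ι → ℚ_[p]) {C : ℝ} (hC : 0 ≤ C)
    (h : ∀ i ∈ s, ‖f i‖ ≤ C) : ‖∑ i ∈ s, f i‖ ≤ C :=
  IsUltrametricDist.norm_sum_le_of_forall_le_of_nonneg hC h

lemma cong_add {x y x' y' : ℚ_[p]} {ε : ℝ} (h1 : ‖x - x'‖ ≤ ε) (h2 : ‖y - y'‖ ≤ ε) :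
    ‖(x + y) - (x' + y')‖ ≤ ε := by
  have : (x + y) - (x' + y') = (x - x') + (y - y') := by ring
  rw [this]; exact (IsUltrametricDist.norm_add_le_max _ _).trans (max_le h1 h2)

lemma cong_mul {x y x' y' : ℚ_[p]} {ε : ℝ} (hx : ‖x‖ ≤ 1) (hy : ‖y'‖ ≤ 1)
    (h1 : ‖x - x'‖ ≤ ε) (h2 : ‖y - y'‖ ≤ ε) : ‖x * y - x' * y'‖ ≤ ε := by
  have : x * y - x' * y' = x * (y - y') + (x - x') * y' := by ring
  rw [this]
  refine (IsUltrametricDist.norm_add_le_max _ _).trans (max_le ?_ ?_)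
  · calc ‖x * (y - y')‖ = ‖x‖ * ‖y - y'‖ := norm_mul _ _
      _ ≤ 1 * ε := mul_le_mul hx h2 (norm_nonneg _) zero_le_one
      _ = ε := one_mul ε
  · calc ‖(x - x') * y'‖ = ‖x - x'‖ * ‖y'‖ := norm_mul _ _
      _ ≤ ε * 1 := mul_le_mul h1 hy (norm_nonneg _) ((norm_nonneg _).trans h1)
      _ = ε := mul_one ε

end

section
variable {p : ℕ} [hp : Fact p.Prime]
lemma nat_pow_cong {m : ℕ} (hm : ¬ p ∣ m) {r k₁ k₂ : ℕ}
    (h : k₁ ≡ k₂ [MOD Nat.totient (p ^ r)]) :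
    ‖((m : ℚ_[p]) ^ k₁ - (m : ℚ_[p]) ^ k₂)‖ ≤ (p : ℝ) ^ (-(r : ℤ)) := by
  have hcop : Nat.Coprime m (p ^ r) :=
    Nat.Coprime.pow_right r (Nat.coprime_comm.mp (hp.out.coprime_iff_not_dvd.mpr hm))
  have key : ∀ a b : ℕ, a ≤ b → a ≡ b [MOD Nat.totient (p ^ r)] →
      m ^ a ≡ m ^ b [MOD p ^ r] := by
    intro a b hab hmod
    obtain ⟨j, hj⟩ := (Nat.modEq_iff_dvd' hab).mp hmod
    have hb : b = a + Nat.totient (p ^ r) * j := by omega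
    calc m ^ a = m ^ a * 1 ^ j := by ring
      _ ≡ m ^ a * (m ^ Nat.totient (p ^ r)) ^ j [MOD p ^ r] :=
        Nat.ModEq.mul_left _ (Nat.ModEq.pow j (Nat.ModEq.pow_totient hcop).symm)
      _ = m ^ b := by rw [hb]; ring
  have hmod : m ^ k₁ ≡ m ^ k₂ [MOD p ^ r] := by
    rcases le_total k₁ k₂ with hle | hle
    · exact key _ _ hle h
    · exact (key _ _ hle h.symm).symm
  have hz : (p ^ r : ℤ) ∣ (m : ℤ) ^ k₁ - (m : ℤ) ^ k₂ := by
    have h2 := hmod.dvd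
    push_cast at h2
    exact (dvd_sub_comm).mp h2
  have := int_cong (p := p) hz
  push_cast at this ⊢
  exact this

end

lemma cell_a (n : ℕ) (x : ℕ) :
    (2:ℚ)^n * ((x:ℚ) + 1/2)^(n+1) = ((2*x+1 : ℕ):ℚ)^(n+1)/2 := by
  have h : ((x:ℚ) + 1/2) = ((2*x+1 : ℕ):ℚ)/2 := by push_cast; ring
  rw [h, div_pow]
  field_simp
  ring

lemma cell_b (n : ℕ) (x : ℕ) (hn : Even n) :
    (2:ℚ)^n * (-((x:ℚ) + 1/2))^(n+1) = -(((2*x+1 : ℕ):ℚ)^(n+1)/2) := by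
  rw [Odd.neg_pow (Even.add_one hn), mul_neg, cell_a]

lemma expand (p k : ℕ) (hk : 2 ≤ k) (he : Even k) (f : ℕ → ℕ) :
    ((2:ℚ)^(k-2) * (Nat.factorial (k-1))) * Qpk p k f
      = (∑ i ∈ Finset.range (durfee f),
          ((if ¬ p ∣ (2 * armLen f i + 1) then ((2 * armLen f i + 1 : ℕ):ℚ)^(k-1)/2 else 0)
           + (if ¬ p ∣ (2 * legLen f i + 1) then ((2 * legLen f i + 1 : ℕ):ℚ)^(k-1)/2 else 0)))
        + ((2:ℚ)^(k-2) * (Nat.factorial (k-1))) * ((1 - (p:ℚ)^(k-1)) * betaCoeff k) := by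
  rw [Qpk, mul_add]
  congr 1
  have hf0 : ((Nat.factorial (k-1) : ℕ) : ℚ) ≠ 0 :=
    Nat.cast_ne_zero.mpr (Nat.factorial_ne_zero _)
  have h1 : ((2:ℚ)^(k-2) * (Nat.factorial (k-1))) * (Ppk p (k-1) f / (Nat.factorial (k-1)))
      = (2:ℚ)^(k-2) * Ppk p (k-1) f := by
    field_simp
  rw [h1]
  unfold Ppk
  rw [Finset.mul_sum]
  refine Finset.sum_congr rfl fun i _ => ?_
  have hev : Even (k-2) := by
    obtain ⟨j, hj⟩ := he
    exact ⟨j - 1, by omega⟩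
  have hn : k - 1 = (k-2) + 1 := by omega
  rw [hn]
  have harm := cell_a (k-2) (armLen f i)
  have hleg := cell_b (k-2) (legLen f i) hev
  by_cases hA : p ∣ (2 * armLen f i + 1) <;> by_cases hB : p ∣ (2 * legLen f i + 1)
  · rw [if_neg (not_not_intro hA), if_neg (not_not_intro hA),
      if_neg (not_not_intro hB), if_neg (not_not_intro hB)]
    ring
  · rw [if_neg (not_not_intro hA), if_neg (not_not_intro hA), if_pos hB, if_pos hB]
    linear_combination -hleg
  · rw [if_pos hA, if_pos hA, if_neg (not_not_intro hB), if_neg (not_not_intro hB)]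
    linear_combination harm
  · rw [if_pos hA, if_pos hA, if_pos hB, if_pos hB]
    linear_combination harm - hleg

lemma b_eq (p k : ℕ) (hk : 2 ≤ k) :
    ((2:ℚ)^(k-2) * (Nat.factorial (k-1))) * ((1 - (p:ℚ)^(k-1)) * betaCoeff k)
      = -(((2:ℚ)^(k-1) - 1)/2 * wQ p k) := by
  rw [betaCoeff, wQ]
  have hz : ((k:ℤ)-1) = ((k-1:ℕ):ℤ) := by omega
  rw [hz, zpow_natCast]
  have hfact : ((Nat.factorial k : ℕ) : ℚ) = (k:ℚ) * ((Nat.factorial (k-1) : ℕ) : ℚ) := by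
    exact_mod_cast (Nat.mul_factorial_pred (show k ≠ 0 by omega)).symm
  have hpow : (2:ℚ)^(k-1) = 2 * 2^(k-2) := by
    rw [← pow_succ']; congr 1; omega
  have hk0 : (k:ℚ) ≠ 0 := Nat.cast_ne_zero.mpr (by omega)
  have hf0 : ((Nat.factorial (k-1) : ℕ) : ℚ) ≠ 0 :=
    Nat.cast_ne_zero.mpr (Nat.factorial_ne_zero _)
  have h2 : (2:ℚ)^(k-2) ≠ 0 := by positivity
  rw [hfact, hpow]
  field_simp


section
variable {p : ℕ} [hp : Fact p.Prime]

lemma two_not_dvd (hp5 : 5 ≤ p) : ¬ p ∣ 2 := fun h => by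
  have := Nat.le_of_dvd (by norm_num) h
  omega

lemma norm_two_eq_one (hp5 : 5 ≤ p) : ‖(2:ℚ_[p])‖ = 1 := by
  have hle : ‖(2:ℚ_[p])‖ ≤ 1 := by
    have := Padic.norm_int_le_one (p := p) 2
    exact_mod_cast this
  have hlt : ¬ ‖(2:ℚ_[p])‖ < 1 := by
    intro hlt
    have h1 : ‖((2:ℤ) : ℚ_[p])‖ < 1 := by exact_mod_cast hlt
    have h2 := Padic.norm_intCast_lt_one_iff.mp h1
    have h3 : p ∣ 2 := by exact_mod_cast h2
    exact two_not_dvd hp5 h3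
  linarith [lt_or_eq_of_le hle]

lemma term_cong {r k₁ k₂ : ℕ} (hp5 : 5 ≤ p) (hr : 1 ≤ r)
    (he₁ : Even k₁) (he₂ : Even k₂) (hk₁ : 2 ≤ k₁) (hk₂ : 2 ≤ k₂)
    (hcong : k₁ ≡ k₂ [MOD Nat.totient (p ^ r)])
    (hnd₁ : ¬ (p - 1) ∣ k₁) (hnd₂ : ¬ (p - 1) ∣ k₂) (f : ℕ → ℕ) :
    ‖((((2:ℚ)^(k₁-2) * (Nat.factorial (k₁-1))) * Qpk p k₁ f : ℚ) : ℚ_[p])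
      - ((((2:ℚ)^(k₂-2) * (Nat.factorial (k₂-1))) * Qpk p k₂ f : ℚ) : ℚ_[p])‖
      ≤ (p:ℝ)^(-(r:ℤ)) := by
  set ε : ℝ := (p:ℝ)^(-(r:ℤ)) with hεdef
  have hε0 : (0:ℝ) ≤ ε := by rw [hεdef]; positivity
  have hkm1 : k₁ - 1 ≡ k₂ - 1 [MOD Nat.totient (p ^ r)] := by
    have h1' : (k₁ - 1) + 1 ≡ (k₂ - 1) + 1 [MOD Nat.totient (p ^ r)] := by
      have e1 : k₁ - 1 + 1 = k₁ := by omega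
      have e2 : k₂ - 1 + 1 = k₂ := by omega
      rw [e1, e2]; exact hcong
    exact Nat.ModEq.add_right_cancel' 1 h1'
  have hkum := kummer (p := p) hr hk₁ hk₂ hcong hnd₁ hnd₂
  have h2inv : ‖((2:ℚ_[p]))⁻¹‖ = 1 := by rw [norm_inv, norm_two_eq_one hp5, inv_one]
  -- half-power congruence
  have hhalf : ∀ x : ℕ, ‖((((if ¬ p ∣ (2*x+1) then ((2*x+1 : ℕ):ℚ)^(k₁-1)/2 else 0)
      - (if ¬ p ∣ (2*x+1) then ((2*x+1 : ℕ):ℚ)^(k₂-1)/2 else 0) : ℚ)) : ℚ_[p])‖ ≤ ε := by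
    intro x
    by_cases hx : p ∣ (2*x+1)
    · rw [if_neg (not_not_intro hx), if_neg (not_not_intro hx)]
      simpa using hε0
    · rw [if_pos hx, if_pos hx]
      have hnp := nat_pow_cong (p := p) hx (r := r) hkm1
      have e : ((((2*x+1 : ℕ):ℚ)^(k₁-1)/2 - ((2*x+1 : ℕ):ℚ)^(k₂-1)/2 : ℚ) : ℚ_[p])
          = (((2*x+1 : ℕ) : ℚ_[p])^(k₁-1) - ((2*x+1 : ℕ) : ℚ_[p])^(k₂-1)) * (2:ℚ_[p])⁻¹ := by
        push_cast
        ring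
      rw [e, norm_mul, h2inv, mul_one]
      exact hnp
  -- expand both
  have e₁ := expand p k₁ hk₁ he₁ f
  have e₂ := expand p k₂ hk₂ he₂ f
  set S₁ : ℚ := ∑ i ∈ Finset.range (durfee f),
          ((if ¬ p ∣ (2 * armLen f i + 1) then ((2 * armLen f i + 1 : ℕ):ℚ)^(k₁-1)/2 else 0)
           + (if ¬ p ∣ (2 * legLen f i + 1) then ((2 * legLen f i + 1 : ℕ):ℚ)^(k₁-1)/2 else 0)) with hS₁
  set S₂ : ℚ := ∑ i ∈ Finset.range (durfee f),
          ((if ¬ p ∣ (2 * armLen f i + 1) then ((2 * armLen f i + 1 : ℕ):ℚ)^(k₂-1)/2 else 0)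
           + (if ¬ p ∣ (2 * legLen f i + 1) then ((2 * legLen f i + 1 : ℕ):ℚ)^(k₂-1)/2 else 0)) with hS₂
  set B₁ : ℚ := ((2:ℚ)^(k₁-2) * (Nat.factorial (k₁-1))) * ((1 - (p:ℚ)^(k₁-1)) * betaCoeff k₁) with hB₁
  set B₂ : ℚ := ((2:ℚ)^(k₂-2) * (Nat.factorial (k₂-1))) * ((1 - (p:ℚ)^(k₂-1)) * betaCoeff k₂) with hB₂
  have emain : (((2:ℚ)^(k₁-2) * (Nat.factorial (k₁-1))) * Qpk p k₁ f : ℚ)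
      - (((2:ℚ)^(k₂-2) * (Nat.factorial (k₂-1))) * Qpk p k₂ f) = (S₁ - S₂) + (B₁ - B₂) := by
    rw [e₁, e₂]; ring
  have ecast : ((((2:ℚ)^(k₁-2) * (Nat.factorial (k₁-1))) * Qpk p k₁ f : ℚ) : ℚ_[p])
      - ((((2:ℚ)^(k₂-2) * (Nat.factorial (k₂-1))) * Qpk p k₂ f : ℚ) : ℚ_[p])
      = (((S₁ - S₂ : ℚ)) : ℚ_[p]) + (((B₁ - B₂ : ℚ)) : ℚ_[p]) := by
    rw [← Rat.cast_add, ← Rat.cast_sub, emain]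
  rw [ecast]
  refine (IsUltrametricDist.norm_add_le_max _ _).trans (max_le ?_ ?_)
  · -- sum part
    have hsub : (S₁ - S₂ : ℚ) = ∑ i ∈ Finset.range (durfee f),
        (((if ¬ p ∣ (2 * armLen f i + 1) then ((2 * armLen f i + 1 : ℕ):ℚ)^(k₁-1)/2 else 0)
          - (if ¬ p ∣ (2 * armLen f i + 1) then ((2 * armLen f i + 1 : ℕ):ℚ)^(k₂-1)/2 else 0))
         + ((if ¬ p ∣ (2 * legLen f i + 1) then ((2 * legLen f i + 1 : ℕ):ℚ)^(k₁-1)/2 else 0)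
          - (if ¬ p ∣ (2 * legLen f i + 1) then ((2 * legLen f i + 1 : ℕ):ℚ)^(k₂-1)/2 else 0))) := by
      rw [hS₁, hS₂, ← Finset.sum_sub_distrib]
      refine Finset.sum_congr rfl fun i _ => ?_
      ring
    rw [hsub, Rat.cast_sum]
    refine usum _ _ hε0 fun i _ => ?_
    rw [Rat.cast_add]
    refine (IsUltrametricDist.norm_add_le_max _ _).trans (max_le ?_ ?_)
    · exact hhalf (armLen f i)
    · exact hhalf (legLen f i)
  · -- beta part
    rw [hB₁, hB₂, b_eq p k₁ hk₁, b_eq p k₂ hk₂]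
    have e : ((-(((2:ℚ)^(k₁-1) - 1)/2 * wQ p k₁) - -(((2:ℚ)^(k₂-1) - 1)/2 * wQ p k₂) : ℚ) : ℚ_[p])
        = -(((2:ℚ_[p])^(k₁-1) - 1) * ((wQ p k₁ : ℚ) : ℚ_[p])
            - ((2:ℚ_[p])^(k₂-1) - 1) * ((wQ p k₂ : ℚ) : ℚ_[p])) * (2:ℚ_[p])⁻¹ := by
      push_cast
      ring
    rw [e, norm_mul, h2inv, mul_one, norm_neg]
    refine cong_mul ?_ hkum.2 ?_ hkum.1
    · have := Padic.norm_int_le_one (p := p) ((2:ℤ)^(k₁-1) - 1)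
      push_cast at this
      exact this
    · have hd := pow_pow_dvd (p := p) (two_not_dvd hp5) (r := r) hkm1
      have hi := int_cong (p := p) hd
      push_cast at hi
      have e2 : (2:ℚ_[p])^(k₁-1) - 1 - ((2:ℚ_[p])^(k₂-1) - 1)
          = (2:ℚ_[p])^(k₁-1) - (2:ℚ_[p])^(k₂-1) := by ring
      rw [e2]
      exact hi
end

/-- For a prime `p ≥ 5`, `r ≥ 1`, and even `k₁, k₂ ≥ 2` with
`k₁ ≡ k₂ (mod φ(p^r))` and `k₁, k₂ ≢ 0 (mod p-1)`, every Fourier coefficient of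
`𝒬^{(p)}_{k₁} = 2^{k₁-2}(k₁-1)! ⟨Q_{k₁}^{(p)}⟩_q` is congruent mod `p^r` (in `ℤ_p`)
to the corresponding coefficient of `𝒬^{(p)}_{k₂}`.  Here the q-bracket
`⟨f⟩_q = (∑_λ f(λ)q^{|λ|})/(∑_λ q^{|λ|})` is encoded by the defining relation
`Qᵢ ⬝ (∑_λ q^{|λ|}) = 2^{kᵢ-2}(kᵢ-1)! ∑_λ Q_{kᵢ}^{(p)}(λ) q^{|λ|}`. -/
theorem bracket_congruent (p r k₁ k₂ : ℕ) [Fact p.Prime] (hp5 : 5 ≤ p) (hr : 1 ≤ r)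
    (he₁ : Even k₁) (he₂ : Even k₂) (hk₁ : 2 ≤ k₁) (hk₂ : 2 ≤ k₂)
    (hcong : k₁ ≡ k₂ [MOD Nat.totient (p ^ r)])
    (hnd₁ : ¬ (p - 1) ∣ k₁) (hnd₂ : ¬ (p - 1) ∣ k₂)
    (Q₁ Q₂ : PowerSeries ℚ)
    (hQ₁ : Q₁ * partGen = PowerSeries.C (R := ℚ) (2 ^ (k₁ - 2) * (Nat.factorial (k₁ - 1))) * numSeries p k₁)
    (hQ₂ : Q₂ * partGen = PowerSeries.C (R := ℚ) (2 ^ (k₂ - 2) * (Nat.factorial (k₂ - 1))) * numSeries p k₂) :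
    ∀ n : ℕ, ‖((PowerSeries.coeff (R := ℚ) n Q₁ : ℚ) : ℚ_[p]) - ((PowerSeries.coeff (R := ℚ) n Q₂ : ℚ) : ℚ_[p])‖
      ≤ (p : ℝ) ^ (-(r : ℤ)) := by
  have hεdef : (0:ℝ) ≤ (p:ℝ)^(-(r:ℤ)) := by positivity
  -- coefficient recursion
  have hrec : ∀ (Q : PowerSeries ℚ) (k : ℕ),
      (Q * partGen = PowerSeries.C (R := ℚ) (2 ^ (k - 2) * (Nat.factorial (k - 1))) * numSeries p k) →
      ∀ j : ℕ, PowerSeries.coeff (R := ℚ) j Q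
        = ((2:ℚ) ^ (k - 2) * (Nat.factorial (k - 1))) * (∑ lam : j.Partition, Qpk p k (rows lam))
          - ∑ i ∈ range j, PowerSeries.coeff (R := ℚ) i Q * (Fintype.card ((j - i).Partition) : ℚ) := by
    intro Q k hQ j
    have h := congrArg (PowerSeries.coeff (R := ℚ) j) hQ
    rw [PowerSeries.coeff_mul, Finset.Nat.sum_antidiagonal_eq_sum_range_succ_mk,
      Finset.sum_range_succ] at h
    have hg0 : PowerSeries.coeff (R := ℚ) (j - j) partGen = 1 := by
      rw [Nat.sub_self, partGen, PowerSeries.coeff_mk]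
      simp
    rw [hg0, mul_one] at h
    have hR : PowerSeries.coeff (R := ℚ) j
        (PowerSeries.C (R := ℚ) (2 ^ (k - 2) * (Nat.factorial (k - 1))) * numSeries p k)
        = ((2:ℚ) ^ (k - 2) * (Nat.factorial (k - 1))) * (∑ lam : j.Partition, Qpk p k (rows lam)) := by
      rw [PowerSeries.coeff_C_mul, numSeries, PowerSeries.coeff_mk]
    rw [hR] at h
    have hsum : ∑ i ∈ range j, PowerSeries.coeff (R := ℚ) i Q * PowerSeries.coeff (R := ℚ) (j - i) partGen
        = ∑ i ∈ range j, PowerSeries.coeff (R := ℚ) i Q * (Fintype.card ((j - i).Partition) : ℚ) := by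
      refine Finset.sum_congr rfl fun i _ => ?_
      rw [partGen, PowerSeries.coeff_mk]
    rw [hsum] at h
    linarith [h]
  intro n
  induction n using Nat.strong_induction_on with
  | _ n ih =>
    rw [hrec Q₁ k₁ hQ₁ n, hrec Q₂ k₂ hQ₂ n]
    set S₁ : ℚ := ((2:ℚ) ^ (k₁ - 2) * (Nat.factorial (k₁ - 1))) * (∑ lam : n.Partition, Qpk p k₁ (rows lam)) with hS₁
    set S₂ : ℚ := ((2:ℚ) ^ (k₂ - 2) * (Nat.factorial (k₂ - 1))) * (∑ lam : n.Partition, Qpk p k₂ (rows lam)) with hS₂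
    set T₁ : ℚ := ∑ i ∈ range n, PowerSeries.coeff (R := ℚ) i Q₁ * (Fintype.card ((n - i).Partition) : ℚ) with hT₁
    set T₂ : ℚ := ∑ i ∈ range n, PowerSeries.coeff (R := ℚ) i Q₂ * (Fintype.card ((n - i).Partition) : ℚ) with hT₂
    have ecast : (((S₁ - T₁ : ℚ)) : ℚ_[p]) - (((S₂ - T₂ : ℚ)) : ℚ_[p])
        = (((S₁ - S₂ : ℚ)) : ℚ_[p]) + (-(((T₁ - T₂ : ℚ)) : ℚ_[p])) := by
      push_cast
      ring
    rw [ecast]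
    refine (IsUltrametricDist.norm_add_le_max _ _).trans (max_le ?_ ?_)
    · -- main term
      have hsub : (S₁ - S₂ : ℚ) = ∑ lam : n.Partition,
          (((2:ℚ) ^ (k₁ - 2) * (Nat.factorial (k₁ - 1))) * Qpk p k₁ (rows lam)
            - ((2:ℚ) ^ (k₂ - 2) * (Nat.factorial (k₂ - 1))) * Qpk p k₂ (rows lam)) := by
        rw [hS₁, hS₂, Finset.mul_sum, Finset.mul_sum, ← Finset.sum_sub_distrib]
      rw [hsub, Rat.cast_sum]
      refine usum _ _ hεdef fun lam _ => ?_
      have e : ((((2:ℚ) ^ (k₁ - 2) * (Nat.factorial (k₁ - 1))) * Qpk p k₁ (rows lam)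
            - ((2:ℚ) ^ (k₂ - 2) * (Nat.factorial (k₂ - 1))) * Qpk p k₂ (rows lam) : ℚ) : ℚ_[p])
          = ((((2:ℚ)^(k₁-2) * (Nat.factorial (k₁-1))) * Qpk p k₁ (rows lam) : ℚ) : ℚ_[p])
            - ((((2:ℚ)^(k₂-2) * (Nat.factorial (k₂-1))) * Qpk p k₂ (rows lam) : ℚ) : ℚ_[p]) := by
        push_cast
        ring
      rw [e]
      exact term_cong hp5 hr he₁ he₂ hk₁ hk₂ hcong hnd₁ hnd₂ (rows lam)
    · -- tail term
      rw [norm_neg]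
      have hsub : (T₁ - T₂ : ℚ) = ∑ i ∈ range n,
          (PowerSeries.coeff (R := ℚ) i Q₁ - PowerSeries.coeff (R := ℚ) i Q₂)
            * (Fintype.card ((n - i).Partition) : ℚ) := by
        rw [hT₁, hT₂, ← Finset.sum_sub_distrib]
        refine Finset.sum_congr rfl fun i _ => ?_
        ring
      rw [hsub, Rat.cast_sum]
      refine usum _ _ hεdef fun i hi => ?_
      have e : (((PowerSeries.coeff (R := ℚ) i Q₁ - PowerSeries.coeff (R := ℚ) i Q₂)
            * (Fintype.card ((n - i).Partition) : ℚ) : ℚ) : ℚ_[p])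
          = (((PowerSeries.coeff (R := ℚ) i Q₁ : ℚ) : ℚ_[p]) - ((PowerSeries.coeff (R := ℚ) i Q₂ : ℚ) : ℚ_[p]))
            * ((Fintype.card ((n - i).Partition) : ℕ) : ℚ_[p]) := by
        push_cast
        ring
      rw [e, norm_mul]
      calc ‖((PowerSeries.coeff (R := ℚ) i Q₁ : ℚ) : ℚ_[p]) - ((PowerSeries.coeff (R := ℚ) i Q₂ : ℚ) : ℚ_[p])‖
            * ‖((Fintype.card ((n - i).Partition) : ℕ) : ℚ_[p])‖
          ≤ (p:ℝ)^(-(r:ℤ)) * 1 := by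
            refine mul_le_mul (ih i (Finset.mem_range.mp hi)) (norm_nat_le_one _)
              (norm_nonneg _) hεdef
        _ = (p:ℝ)^(-(r:ℤ)) := mul_one _
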